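/- In an exact naturally Mal'tsev category with coequalizers, the categorical commutator of any two equivalence relations R and S on the same object X is trivial: there exists a double centralizing relation on R and S. -/

import Mathlib

open CategoryTheory CategoryTheory.Limits

universe v u v' u'

variable {C : Type u} [Category.{v} C]

/-- An internal relation on an object `X`: a pair of jointly monic morphisms. -/
structure RelOn (X : C) where
  R : C
  r1 : R ⟶ X
  r2 : R ⟶ X
  jmono : ∀ {Z : C} (f g : Z ⟶ R), f ≫ r1 = g ≫ r1 → f ≫ r2 = g ≫ r2 → f = g

namespace RelOn

variable {X : C} (ρ : RelOn X)

def Reflexive : Prop :=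
  ∃ δ : X ⟶ ρ.R, δ ≫ ρ.r1 = 𝟙 X ∧ δ ≫ ρ.r2 = 𝟙 X

def Symmetric : Prop :=
  ∃ σ : ρ.R ⟶ ρ.R, σ ≫ ρ.r1 = ρ.r2 ∧ σ ≫ ρ.r2 = ρ.r1

/-- Transitivity, formulated with generalized elements. -/
def Transitive : Prop :=
  ∀ {Z : C} (a b : Z ⟶ ρ.R), a ≫ ρ.r2 = b ≫ ρ.r1 →
    ∃ t : Z ⟶ ρ.R, t ≫ ρ.r1 = a ≫ ρ.r1 ∧ t ≫ ρ.r2 = b ≫ ρ.r2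

def IsEquivalence : Prop := ρ.Reflexive ∧ ρ.Symmetric ∧ ρ.Transitive

/-- The relation is effective: it is the kernel pair of some morphism. -/
def Effective : Prop :=
  ∃ (Y : C) (f : X ⟶ Y) (h : ρ.r1 ≫ f = ρ.r2 ≫ f),
    Nonempty (IsLimit (PullbackCone.mk ρ.r1 ρ.r2 h))

end RelOn

/-- A Mal'tsev category: every internal reflexive relation is an equivalence relation. -/
class MaltsevCat (C : Type u) [Category.{v} C] : Prop where
  refl_is_equiv : ∀ {X : C} (ρ : RelOn X), ρ.Reflexive → ρ.Symmetric ∧ ρ.Transitive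

/-- A regular category: finitely complete, coequalizers of kernel pairs,
pullback-stable regular epimorphisms. -/
class RegularCat (C : Type u) [Category.{v} C] : Prop where
  hasFiniteLimits : HasFiniteLimits C
  hasCoeqOfKernelPair : ∀ {A B R : C} (f : A ⟶ B) (p1 p2 : R ⟶ A) (h : p1 ≫ f = p2 ≫ f),
    Nonempty (IsLimit (PullbackCone.mk p1 p2 h)) → HasCoequalizer p1 p2
  regEpiStable : ∀ {P A B Z : C} (f : A ⟶ B) (g : Z ⟶ B) (p1 : P ⟶ A) (p2 : P ⟶ Z)
    (h : p1 ≫ f = p2 ≫ g), Nonempty (IsLimit (PullbackCone.mk p1 p2 h)) →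
    Nonempty (RegularEpi f) → Nonempty (RegularEpi p2)

/-- A Barr-exact category: regular and every equivalence relation is effective. -/
class ExactCat (C : Type u) [Category.{v} C] extends RegularCat C : Prop where
  effective : ∀ {X : C} (ρ : RelOn X), ρ.IsEquivalence → ρ.Effective

/-- An internal reflexive graph. -/
structure ReflexiveGraph (C : Type u) [Category.{v} C] where
  C1 : C
  C0 : C
  d : C1 ⟶ C0
  c : C1 ⟶ C0
  e : C0 ⟶ C1
  ed : e ≫ d = 𝟙 C0
  ec : e ≫ c = 𝟙 C0

/-- An internal category structure on a reflexive graph, formulated via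
generalized elements (equivalent to the usual pullback formulation in a
finitely complete category). `comp a b _` is the composite "`a` followed by `b`". -/
structure CatStruct {C : Type u} [Category.{v} C] (G : ReflexiveGraph C) where
  comp : ∀ {Z : C} (a b : Z ⟶ G.C1), a ≫ G.c = b ≫ G.d → (Z ⟶ G.C1)
  comp_natural : ∀ {W Z : C} (w : W ⟶ Z) (a b : Z ⟶ G.C1) (h : a ≫ G.c = b ≫ G.d)
      (h' : (w ≫ a) ≫ G.c = (w ≫ b) ≫ G.d),
      w ≫ comp a b h = comp (w ≫ a) (w ≫ b) h'
  comp_d : ∀ {Z : C} (a b : Z ⟶ G.C1) (h : a ≫ G.c = b ≫ G.d), comp a b h ≫ G.d = a ≫ G.d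
  comp_c : ∀ {Z : C} (a b : Z ⟶ G.C1) (h : a ≫ G.c = b ≫ G.d), comp a b h ≫ G.c = b ≫ G.c
  comp_unit_l : ∀ {Z : C} (a : Z ⟶ G.C1) (h : (a ≫ G.d ≫ G.e) ≫ G.c = a ≫ G.d),
      comp (a ≫ G.d ≫ G.e) a h = a
  comp_unit_r : ∀ {Z : C} (a : Z ⟶ G.C1) (h : a ≫ G.c = (a ≫ G.c ≫ G.e) ≫ G.d),
      comp a (a ≫ G.c ≫ G.e) h = a
  comp_assoc : ∀ {Z : C} (a b c' : Z ⟶ G.C1) (h1 : a ≫ G.c = b ≫ G.d)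
      (h2 : b ≫ G.c = c' ≫ G.d)
      (h3 : comp a b h1 ≫ G.c = c' ≫ G.d)
      (h4 : a ≫ G.c = comp b c' h2 ≫ G.d),
      comp (comp a b h1) c' h3 = comp a (comp b c' h2) h4

/-- The internal category has inverses, i.e. is an internal groupoid. -/
def CatStruct.HasInverses {C : Type u} [Category.{v} C] {G : ReflexiveGraph C}
    (S : CatStruct G) : Prop :=
  ∃ i : G.C1 ⟶ G.C1, i ≫ G.d = G.c ∧ i ≫ G.c = G.d ∧
    (∀ {Z : C} (a : Z ⟶ G.C1) (h : a ≫ G.c = (a ≫ i) ≫ G.d),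
      S.comp a (a ≫ i) h = a ≫ G.d ≫ G.e) ∧
    (∀ {Z : C} (a : Z ⟶ G.C1) (h : (a ≫ i) ≫ G.c = a ≫ G.d),
      S.comp (a ≫ i) a h = a ≫ G.c ≫ G.e)

/-- An internal groupoid. -/
structure GroupoidObj (C : Type u) [Category.{v} C] where
  graph : ReflexiveGraph C
  str : CatStruct graph
  hasInv : str.HasInverses

/-- Internal functors between internal groupoids. -/
@[ext]
structure GrpdHom (A B : GroupoidObj C) where
  f0 : A.graph.C0 ⟶ B.graph.C0
  f1 : A.graph.C1 ⟶ B.graph.C1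
  hd : f1 ≫ B.graph.d = A.graph.d ≫ f0
  hc : f1 ≫ B.graph.c = A.graph.c ≫ f0
  he : A.graph.e ≫ f1 = f0 ≫ B.graph.e
  hm : ∀ {Z : C} (a b : Z ⟶ A.graph.C1) (h : a ≫ A.graph.c = b ≫ A.graph.d)
      (h' : (a ≫ f1) ≫ B.graph.c = (b ≫ f1) ≫ B.graph.d),
      A.str.comp a b h ≫ f1 = B.str.comp (a ≫ f1) (b ≫ f1) h'

lemma GrpdHom.cond {A B : GroupoidObj C} (f : GrpdHom A B) {Z : C} {a b : Z ⟶ A.graph.C1}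
    (h : a ≫ A.graph.c = b ≫ A.graph.d) :
    (a ≫ f.f1) ≫ B.graph.c = (b ≫ f.f1) ≫ B.graph.d := by
  rw [Category.assoc, f.hc, Category.assoc, f.hd, ← Category.assoc, h, Category.assoc]

def GrpdHom.id (A : GroupoidObj C) : GrpdHom A A where
  f0 := 𝟙 _
  f1 := 𝟙 _
  hd := by simp
  hc := by simp
  he := by simp
  hm := by intros; simp

def GrpdHom.comp {A B D : GroupoidObj C} (f : GrpdHom A B) (g : GrpdHom B D) : GrpdHom A D where
  f0 := f.f0 ≫ g.f0
  f1 := f.f1 ≫ g.f1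
  hd := by rw [Category.assoc, g.hd, ← Category.assoc, f.hd, Category.assoc]
  hc := by rw [Category.assoc, g.hc, ← Category.assoc, f.hc, Category.assoc]
  he := by rw [← Category.assoc, f.he, Category.assoc, g.he, ← Category.assoc]
  hm := by
    intro Z a b h h'
    rw [← Category.assoc, f.hm a b h (f.cond h), g.hm _ _ (f.cond h) (g.cond (f.cond h))]
    simp only [Category.assoc]

instance : Category (GroupoidObj C) where
  Hom := GrpdHom
  id := GrpdHom.id
  comp := GrpdHom.comp
  id_comp f := by apply GrpdHom.ext <;> simp [GrpdHom.comp, GrpdHom.id]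
  comp_id f := by apply GrpdHom.ext <;> simp [GrpdHom.comp, GrpdHom.id]
  assoc f g h := by apply GrpdHom.ext <;> simp [GrpdHom.comp]

/-- Coerce a morphism of internal groupoids to its underlying data. -/
def homToGrpdHom {A B : GroupoidObj C} (f : A ⟶ B) : GrpdHom A B := f

/-- Morphisms of reflexive graphs. -/
@[ext]
structure RGHom (A B : ReflexiveGraph C) where
  f0 : A.C0 ⟶ B.C0
  f1 : A.C1 ⟶ B.C1
  hd : f1 ≫ B.d = A.d ≫ f0
  hc : f1 ≫ B.c = A.c ≫ f0
  he : A.e ≫ f1 = f0 ≫ B.e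

instance : Category (ReflexiveGraph C) where
  Hom := RGHom
  id A := ⟨𝟙 _, 𝟙 _, by simp, by simp, by simp⟩
  comp f g := ⟨f.f0 ≫ g.f0, f.f1 ≫ g.f1,
    by rw [Category.assoc, g.hd, ← Category.assoc, f.hd, Category.assoc],
    by rw [Category.assoc, g.hc, ← Category.assoc, f.hc, Category.assoc],
    by rw [← Category.assoc, f.he, Category.assoc, g.he, ← Category.assoc]⟩
  id_comp f := by apply RGHom.ext <;> simp
  comp_id f := by apply RGHom.ext <;> simp
  assoc f g h := by apply RGHom.ext <;> simp

def homToRGHom {A B : ReflexiveGraph C} (f : A ⟶ B) : RGHom A B := f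

/-- The forgetful functor from internal groupoids to reflexive graphs. -/
def forgetToRG (C : Type u) [Category.{v} C] : GroupoidObj C ⥤ ReflexiveGraph C where
  obj A := A.graph
  map f := ⟨(homToGrpdHom f).f0, (homToGrpdHom f).f1, (homToGrpdHom f).hd,
    (homToGrpdHom f).hc, (homToGrpdHom f).he⟩
  map_id A := by apply RGHom.ext <;> rfl
  map_comp f g := by apply RGHom.ext <;> rfl

/-- A discrete internal groupoid: the unit is an isomorphism. -/
def GroupoidObj.IsDiscrete (A : GroupoidObj C) : Prop := IsIso A.graph.e

/-- An internal double groupoid (an internal groupoid in internal groupoids) is a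
2-groupoid when its groupoid of objects is discrete. -/
def Is2Grpd (D : GroupoidObj (GroupoidObj C)) : Prop := D.graph.C0.IsDiscrete

/-- Zero morphisms, defined without extra structure: morphisms factoring through a
zero object. -/
def IsZeroMor {A B : C} (f : A ⟶ B) : Prop :=
  ∃ (Z : C) (_ : IsZero Z) (g : A ⟶ Z) (h : Z ⟶ B), f = g ≫ h

/-- `κ` is a kernel of `α`. -/
def IsKernelOf {A B K : C} (κ : K ⟶ A) (α : A ⟶ B) : Prop :=
  IsZeroMor (κ ≫ α) ∧ ∀ {Z : C} (g : Z ⟶ A), IsZeroMor (g ≫ α) → ∃! l : Z ⟶ K, l ≫ κ = g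

/-- A split extension with kernel object `Xo`. -/
structure SplitExtOn (Xo : C) where
  A : C
  B : C
  κ : Xo ⟶ A
  α : A ⟶ B
  β : B ⟶ A
  split : β ≫ α = 𝟙 B
  ker : IsKernelOf κ α

/-- A generic split extension with kernel `Xo`: terminal among split extensions
with kernel `Xo` (morphisms being the identity on the kernel). -/
def IsGenericSplitExt {Xo : C} (E : SplitExtOn Xo) : Prop :=
  ∀ E' : SplitExtOn Xo, ∃! vw : (E'.A ⟶ E.A) × (E'.B ⟶ E.B),
    E'.κ ≫ vw.1 = E.κ ∧ vw.1 ≫ E.α = E'.α ≫ vw.2 ∧ E'.β ≫ vw.1 = vw.2 ≫ E.β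

/-- Action representability: every object admits a generic split extension. -/
def ActionRepresentable (C : Type u) [Category.{v} C] : Prop :=
  ∀ X : C, ∃ E : SplitExtOn X, IsGenericSplitExt E

/-- A protoadditive functor: preserves kernels of split epimorphisms. -/
def Protoadditive {X : Type u'} [Category.{v'} X] (H : X ⥤ C) : Prop :=
  ∀ {A B K : X} (α : A ⟶ B) (β : B ⟶ A), β ≫ α = 𝟙 B →
    ∀ (κ : K ⟶ A), IsKernelOf κ α → IsKernelOf (H.map κ) (H.map α)

/-- A semi-abelian category: pointed, Barr-exact, protomodular (split short five
lemma), with binary coproducts. -/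
class SemiAbelian (C : Type u) [Category.{v} C] extends ExactCat C : Prop where
  hasZeroObject : HasZeroObject C
  hasBinaryCoproducts : HasBinaryCoproducts C
  ssfl : ∀ {A B B' Co : C} (k : A ⟶ B) (p : B ⟶ Co) (s : Co ⟶ B)
      (k' : A ⟶ B') (p' : B' ⟶ Co) (s' : Co ⟶ B') (b : B ⟶ B'),
      s ≫ p = 𝟙 Co → s' ≫ p' = 𝟙 Co → IsKernelOf k p → IsKernelOf k' p' →
      k ≫ b = k' → b ≫ p' = p → s ≫ b = s' → IsIso b

/-- A natural Mal'tsev operation on a category with binary products. -/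
def IsNaturallyMaltsev (C : Type u) [Category.{v} C] [HasBinaryProducts C] : Prop :=
  ∃ p : ∀ A : C, (A ⨯ A) ⨯ A ⟶ A,
    (∀ {A B : C} (f : A ⟶ B), prod.map (prod.map f f) f ≫ p B = p A ≫ f) ∧
    (∀ A : C, prod.lift (prod.lift prod.fst prod.snd) prod.snd ≫ p A
        = (prod.fst : A ⨯ A ⟶ A)) ∧
    (∀ A : C, prod.lift (prod.lift prod.fst prod.fst) prod.snd ≫ p A
        = (prod.snd : A ⨯ A ⟶ A))

section AuxStmt15

variable {C : Type u} [Category.{v} C]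

/-- The opposite of an internal relation. -/
def RelOn.opp {X : C} (ρ : RelOn X) : RelOn X where
  R := ρ.R
  r1 := ρ.r2
  r2 := ρ.r1
  jmono f g h1 h2 := ρ.jmono f g h2 h1

/-- A coequalizer of `(f, g)` is also a coequalizer of `(g, f)`. -/
noncomputable def coforkSwap {A B Q : C} {f g : A ⟶ B} {c : B ⟶ Q}
    (w : f ≫ c = g ≫ c) (h : IsColimit (Cofork.ofπ c w)) :
    IsColimit (Cofork.ofπ c w.symm) :=
  Cofork.IsColimit.mk _
    (fun s => Cofork.IsColimit.desc h s.π s.condition.symm)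
    (fun s => Cofork.IsColimit.π_desc' h s.π s.condition.symm)
    (fun s m hm => Cofork.IsColimit.hom_ext h
      (hm.trans (Cofork.IsColimit.π_desc' h s.π s.condition.symm).symm))

variable [HasFiniteLimits C]

lemma P3nat (p : ∀ A : C, (A ⨯ A) ⨯ A ⟶ A)
    (pnat : ∀ {A B : C} (f : A ⟶ B), prod.map (prod.map f f) f ≫ p B = p A ≫ f)
    {Z A B : C} (a b c : Z ⟶ A) (f : A ⟶ B) :
    (prod.lift (prod.lift a b) c ≫ p A) ≫ f
      = prod.lift (prod.lift (a ≫ f) (b ≫ f)) (c ≫ f) ≫ p B := by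
  rw [Category.assoc, ← pnat f, ← Category.assoc]
  congr 1
  simp

lemma P3lft (p : ∀ A : C, (A ⨯ A) ⨯ A ⟶ A)
    (pl : ∀ A : C, prod.lift (prod.lift prod.fst prod.snd) prod.snd ≫ p A
        = (prod.fst : A ⨯ A ⟶ A))
    {Z A : C} (a b : Z ⟶ A) : prod.lift (prod.lift a b) b ≫ p A = a := by
  have h : prod.lift (prod.lift a b) b
      = prod.lift a b ≫ prod.lift (prod.lift prod.fst prod.snd) prod.snd := by
    rw [prod.comp_lift, prod.comp_lift, prod.lift_fst, prod.lift_snd]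
  rw [h, Category.assoc, pl, prod.lift_fst]

lemma P3rgt (p : ∀ A : C, (A ⨯ A) ⨯ A ⟶ A)
    (pr : ∀ A : C, prod.lift (prod.lift prod.fst prod.fst) prod.snd ≫ p A
        = (prod.snd : A ⨯ A ⟶ A))
    {Z A : C} (a b : Z ⟶ A) : prod.lift (prod.lift a a) b ≫ p A = b := by
  have h : prod.lift (prod.lift a a) b
      = prod.lift a b ≫ prod.lift (prod.lift prod.fst prod.fst) prod.snd := by
    rw [prod.comp_lift, prod.comp_lift, prod.lift_fst, prod.lift_snd]
  rw [h, Category.assoc, pr, prod.lift_snd]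

/-- In a naturally Mal'tsev category, every reflexive relation is an equivalence. -/
lemma reflIsEquiv (p : ∀ A : C, (A ⨯ A) ⨯ A ⟶ A)
    (pnat : ∀ {A B : C} (f : A ⟶ B), prod.map (prod.map f f) f ≫ p B = p A ≫ f)
    (pl : ∀ A : C, prod.lift (prod.lift prod.fst prod.snd) prod.snd ≫ p A
        = (prod.fst : A ⨯ A ⟶ A))
    (pr : ∀ A : C, prod.lift (prod.lift prod.fst prod.fst) prod.snd ≫ p A
        = (prod.snd : A ⨯ A ⟶ A))
    {X : C} (ρ : RelOn X) (hρ : ρ.Reflexive) : ρ.IsEquivalence := by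
  obtain ⟨δ, hδ1, hδ2⟩ := hρ
  refine ⟨⟨δ, hδ1, hδ2⟩,
    ⟨prod.lift (prod.lift (ρ.r2 ≫ δ) (𝟙 _)) (ρ.r1 ≫ δ) ≫ p ρ.R, ?_, ?_⟩, ?_⟩
  · rw [P3nat p pnat]
    have e1 : (ρ.r2 ≫ δ) ≫ ρ.r1 = ρ.r2 := by rw [Category.assoc, hδ1, Category.comp_id]
    have e3 : (ρ.r1 ≫ δ) ≫ ρ.r1 = ρ.r1 := by rw [Category.assoc, hδ1, Category.comp_id]
    rw [e1, e3, Category.id_comp]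
    exact P3lft p pl _ _
  · rw [P3nat p pnat]
    have e1 : (ρ.r2 ≫ δ) ≫ ρ.r2 = ρ.r2 := by rw [Category.assoc, hδ2, Category.comp_id]
    have e3 : (ρ.r1 ≫ δ) ≫ ρ.r2 = ρ.r1 := by rw [Category.assoc, hδ2, Category.comp_id]
    rw [e1, e3, Category.id_comp]
    exact P3rgt p pr _ _
  · intro Z a b hab
    refine ⟨prod.lift (prod.lift a (a ≫ ρ.r2 ≫ δ)) b ≫ p ρ.R, ?_, ?_⟩
    · rw [P3nat p pnat]
      have e2 : (a ≫ ρ.r2 ≫ δ) ≫ ρ.r1 = a ≫ ρ.r2 := by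
        rw [Category.assoc, Category.assoc, hδ1, Category.comp_id]
      rw [e2, ← hab]
      exact P3lft p pl _ _
    · rw [P3nat p pnat]
      have e2 : (a ≫ ρ.r2 ≫ δ) ≫ ρ.r2 = a ≫ ρ.r2 := by
        rw [Category.assoc, Category.assoc, hδ2, Category.comp_id]
      rw [e2]
      exact P3rgt p pr _ _

end AuxStmt15

/-- The key square: in an exact naturally Mal'tsev category, the square
`(π1, p1, S.r1, R.r1)` of the double relation induced on `R`, `S` is a pullback. -/
lemma mainSquare15 {C : Type u} [Category.{v} C] [HasFiniteLimits C]
    [ExactCat C] (hNM : IsNaturallyMaltsev C)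
    {X : C} (R S : RelOn X)
    (δR : X ⟶ R.R) (hδR1 : δR ≫ R.r1 = 𝟙 X) (hδR2 : δR ≫ R.r2 = 𝟙 X)
    (δS : X ⟶ S.R) (hδ1 : δS ≫ S.r1 = 𝟙 X)
    {Q : C} (c : S.R ⟶ Q) (hc : (R.r1 ≫ δS) ≫ c = (R.r2 ≫ δS) ≫ c)
    (hcoeq : Nonempty (IsColimit (Cofork.ofπ c hc)))
    {D : C} (π1 π2 : D ⟶ S.R) (hπ : π1 ≫ c = π2 ≫ c)
    (hkp : Nonempty (IsLimit (PullbackCone.mk π1 π2 hπ)))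
    (p1 : D ⟶ R.R)
    (hp11 : p1 ≫ R.r1 = π1 ≫ S.r1) (hp12 : p1 ≫ R.r2 = π2 ≫ S.r1) :
    IsPullback π1 p1 S.r1 R.r1 := by
  obtain ⟨p, pnat, pl, pr⟩ := hNM
  obtain ⟨hkpL⟩ := hkp
  obtain ⟨hcoL⟩ := hcoeq
  have hc' : R.r1 ≫ δS ≫ c = R.r2 ≫ δS ≫ c := by simpa using hc
  set L2 : pullback S.r1 R.r1 ⟶ S.R :=
    prod.lift (prod.lift (pullback.snd S.r1 R.r1 ≫ R.r2 ≫ δS)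
      (pullback.snd S.r1 R.r1 ≫ R.r1 ≫ δS)) (pullback.fst S.r1 R.r1) ≫ p S.R with hL2def
  -- first projection of L2
  have hL2r1 : L2 ≫ S.r1 = pullback.snd S.r1 R.r1 ≫ R.r2 := by
    rw [hL2def, P3nat p pnat]
    have e1 : (pullback.snd S.r1 R.r1 ≫ R.r2 ≫ δS) ≫ S.r1
        = pullback.snd S.r1 R.r1 ≫ R.r2 := by
      rw [Category.assoc, Category.assoc, hδ1, Category.comp_id]
    have e2 : (pullback.snd S.r1 R.r1 ≫ R.r1 ≫ δS) ≫ S.r1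
        = pullback.snd S.r1 R.r1 ≫ R.r1 := by
      rw [Category.assoc, Category.assoc, hδ1, Category.comp_id]
    rw [e1, e2, pullback.condition]
    exact P3lft p pl _ _
  -- L2 is identified with the first projection by c
  have hL2c : pullback.fst S.r1 R.r1 ≫ c = L2 ≫ c := by
    rw [hL2def, P3nat p pnat]
    have e : (pullback.snd S.r1 R.r1 ≫ R.r2 ≫ δS) ≫ c
        = (pullback.snd S.r1 R.r1 ≫ R.r1 ≫ δS) ≫ c := by
      simp only [Category.assoc]
      rw [← hc']
    rw [e]
    exact (P3rgt p pr _ _).symm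
  -- joint monicity of (fst, L2)
  have jm : ∀ {Z : C} (f g : Z ⟶ pullback S.r1 R.r1),
      f ≫ pullback.fst S.r1 R.r1 = g ≫ pullback.fst S.r1 R.r1 →
      f ≫ L2 = g ≫ L2 → f = g := by
    intro Z f g h1 h2
    apply pullback.hom_ext
    · exact h1
    · apply R.jmono
      · have h3 := h1 =≫ S.r1
        simp only [Category.assoc, pullback.condition] at h3
        simp only [Category.assoc]
        exact h3
      · have h3 := h2 =≫ S.r1
        simp only [Category.assoc, hL2r1] at h3
        simp only [Category.assoc]
        exact h3
  -- reflexivity of (fst, L2)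
  have hδPc : 𝟙 S.R ≫ S.r1 = (S.r1 ≫ δR) ≫ R.r1 := by
    rw [Category.id_comp, Category.assoc, hδR1, Category.comp_id]
  set δP : S.R ⟶ pullback S.r1 R.r1 := pullback.lift (𝟙 S.R) (S.r1 ≫ δR) hδPc with hδPdef
  have hδPf : δP ≫ pullback.fst S.r1 R.r1 = 𝟙 S.R := pullback.lift_fst _ _ _
  have hδPs : δP ≫ pullback.snd S.r1 R.r1 = S.r1 ≫ δR := pullback.lift_snd _ _ _
  have hδPL2 : δP ≫ L2 = 𝟙 S.R := by
    rw [hL2def, ← Category.assoc, prod.comp_lift, prod.comp_lift]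
    have e1 : δP ≫ pullback.snd S.r1 R.r1 ≫ R.r2 ≫ δS = S.r1 ≫ δS := by
      rw [← Category.assoc, hδPs, Category.assoc, ← Category.assoc δR, hδR2,
        Category.id_comp]
    have e2 : δP ≫ pullback.snd S.r1 R.r1 ≫ R.r1 ≫ δS = S.r1 ≫ δS := by
      rw [← Category.assoc, hδPs, Category.assoc, ← Category.assoc δR, hδR1,
        Category.id_comp]
    rw [e1, e2, hδPf]
    exact P3rgt p pr _ _
  -- the relation Λ on S
  set ρ : RelOn S.R := ⟨pullback S.r1 R.r1, pullback.fst S.r1 R.r1, L2, jm⟩ with hρdef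
  have hρrefl : ρ.Reflexive := ⟨δP, hδPf, hδPL2⟩
  obtain ⟨Y, q, hq, ⟨hql⟩⟩ := ExactCat.effective ρ (reflIsEquiv p pnat pl pr ρ hρrefl)
  -- the pair (R.r1 ≫ δS, R.r2 ≫ δS) factors through Λ
  have hjc : (R.r1 ≫ δS) ≫ S.r1 = 𝟙 R.R ≫ R.r1 := by
    rw [Category.assoc, hδ1, Category.comp_id, Category.id_comp]
  set j : R.R ⟶ pullback S.r1 R.r1 := pullback.lift (R.r1 ≫ δS) (𝟙 R.R) hjc with hjdef
  have hjf : j ≫ pullback.fst S.r1 R.r1 = R.r1 ≫ δS := pullback.lift_fst _ _ _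
  have hjs : j ≫ pullback.snd S.r1 R.r1 = 𝟙 R.R := pullback.lift_snd _ _ _
  have hjL2 : j ≫ L2 = R.r2 ≫ δS := by
    rw [hL2def, ← Category.assoc, prod.comp_lift, prod.comp_lift]
    have e1 : j ≫ pullback.snd S.r1 R.r1 ≫ R.r2 ≫ δS = R.r2 ≫ δS := by
      rw [← Category.assoc, hjs, Category.id_comp]
    have e2 : j ≫ pullback.snd S.r1 R.r1 ≫ R.r1 ≫ δS = R.r1 ≫ δS := by
      rw [← Category.assoc, hjs, Category.id_comp]
    rw [e1, e2, hjf]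
    exact P3lft p pl _ _
  -- q coequalizes the pair, hence factors through c
  have hq2 : (R.r1 ≫ δS) ≫ q = (R.r2 ≫ δS) ≫ q := by
    rw [← hjf, ← hjL2, Category.assoc, Category.assoc]
    exact j ≫= hq
  have hu : c ≫ Cofork.IsColimit.desc hcoL q hq2 = q :=
    Cofork.IsColimit.π_desc' hcoL q hq2
  have hπq : π1 ≫ q = π2 ≫ q := by
    rw [← hu, ← Category.assoc, hπ, Category.assoc]
  -- the comparison maps
  set w : D ⟶ pullback S.r1 R.r1 := PullbackCone.IsLimit.lift hql π1 π2 hπq with hwdef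
  have hwf : w ≫ pullback.fst S.r1 R.r1 = π1 := PullbackCone.IsLimit.lift_fst hql π1 π2 hπq
  have hwL : w ≫ L2 = π2 := PullbackCone.IsLimit.lift_snd hql π1 π2 hπq
  set v : pullback S.r1 R.r1 ⟶ D :=
    PullbackCone.IsLimit.lift hkpL (pullback.fst S.r1 R.r1) L2 hL2c with hvdef
  have hvf : v ≫ π1 = pullback.fst S.r1 R.r1 :=
    PullbackCone.IsLimit.lift_fst hkpL (pullback.fst S.r1 R.r1) L2 hL2c
  have hvs : v ≫ π2 = L2 :=
    PullbackCone.IsLimit.lift_snd hkpL (pullback.fst S.r1 R.r1) L2 hL2c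
  have hwsnd : w ≫ pullback.snd S.r1 R.r1 = p1 := by
    apply R.jmono
    · rw [Category.assoc, ← pullback.condition, ← Category.assoc, hwf, hp11]
    · rw [Category.assoc, ← hL2r1, ← Category.assoc, hwL, hp12]
  have hvw : v ≫ w = 𝟙 _ := by
    apply jm
    · rw [Category.assoc, hwf, hvf, Category.id_comp]
    · rw [Category.assoc, hwL, hvs, Category.id_comp]
  have hwv : w ≫ v = 𝟙 _ := by
    apply PullbackCone.IsLimit.hom_ext hkpL
    · simp only [PullbackCone.mk_fst]
      change (w ≫ v) ≫ π1 = 𝟙 D ≫ π1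
      rw [Category.assoc, hvf, hwf, Category.id_comp]
    · simp only [PullbackCone.mk_snd]
      change (w ≫ v) ≫ π2 = 𝟙 D ≫ π2
      rw [Category.assoc, hvs, hwL, Category.id_comp]
  exact IsPullback.of_iso_pullback ⟨hp11.symm⟩ ⟨w, v, hwv, hvw⟩ hwf hwsnd

/-- In an exact naturally Mal'tsev category with coequalizers, the double
equivalence relation induced on two equivalence relations `R`, `S` on `X` (the kernel
pair of the coequalizer `c : S → S/R` of `δ_S ∘ r₁`, `δ_S ∘ r₂`) is a double
centralizing relation: all four projection squares are pullbacks, so `[R,S]` is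
trivial. -/
theorem stmt15 {C : Type u} [Category.{v} C] [HasFiniteLimits C] [HasCoequalizers C]
    [ExactCat C] (hNM : IsNaturallyMaltsev C)
    {X : C} (R S : RelOn X) (hR : R.IsEquivalence) (hS : S.IsEquivalence)
    (δS : X ⟶ S.R) (hδ1 : δS ≫ S.r1 = 𝟙 X) (hδ2 : δS ≫ S.r2 = 𝟙 X)
    {Q : C} (c : S.R ⟶ Q) (hc : (R.r1 ≫ δS) ≫ c = (R.r2 ≫ δS) ≫ c)
    (hcoeq : Nonempty (IsColimit (Cofork.ofπ c hc)))
    {Δ : C} (π1 π2 : Δ ⟶ S.R) (hπ : π1 ≫ c = π2 ≫ c)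
    (hkp : Nonempty (IsLimit (PullbackCone.mk π1 π2 hπ)))
    (p1 p2 : Δ ⟶ R.R)
    (hp11 : p1 ≫ R.r1 = π1 ≫ S.r1) (hp12 : p1 ≫ R.r2 = π2 ≫ S.r1)
    (hp21 : p2 ≫ R.r1 = π1 ≫ S.r2) (hp22 : p2 ≫ R.r2 = π2 ≫ S.r2) :
    IsPullback π1 p1 S.r1 R.r1 ∧ IsPullback π2 p1 S.r1 R.r2 ∧
    IsPullback π1 p2 S.r2 R.r1 ∧ IsPullback π2 p2 S.r2 R.r2 := by
  obtain ⟨δR, hδR1, hδR2⟩ := hR.1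
  obtain ⟨hcoL⟩ := hcoeq
  obtain ⟨hkpL⟩ := hkp
  refine ⟨?_, ?_, ?_, ?_⟩
  · exact mainSquare15 hNM R S δR hδR1 hδR2 δS hδ1 c hc ⟨hcoL⟩ π1 π2 hπ ⟨hkpL⟩ p1 hp11 hp12
  · exact mainSquare15 hNM R.opp S δR hδR2 hδR1 δS hδ1 c hc.symm ⟨coforkSwap hc hcoL⟩
      π2 π1 hπ.symm ⟨PullbackCone.flipIsLimit hkpL⟩ p1 hp12 hp11
  · exact mainSquare15 hNM R S.opp δR hδR1 hδR2 δS hδ2 c hc ⟨hcoL⟩ π1 π2 hπ ⟨hkpL⟩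
      p2 hp21 hp22
  · exact mainSquare15 hNM R.opp S.opp δR hδR2 hδR1 δS hδ2 c hc.symm ⟨coforkSwap hc hcoL⟩
      π2 π1 hπ.symm ⟨PullbackCone.flipIsLimit hkpL⟩ p2 hp22 hp21
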